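/- arXiv:cs/0603034 — 3 statements merged into one kernel-verified Lean document; each statement's English description precedes it below -/
import Mathlib

section
/- Assume the action theory ⟨S, E, X, I⟩ satisfies Postulate PS* (no implicit static laws for the whole theory). Then it satisfies Postulate PI* if and only if for every action a, the theory ⟨S, E_a, X_a, I_a⟩ satisfies Postulate PI. -/
/-! Classical propositional formulas. -/
inductive PForm (α : Type) : Type
  | atom : α → PForm α
  | fls  : PForm α
  | not  : PForm α → PForm α
  | and  : PForm α → PForm α → PForm α
  | or   : PForm α → PForm α → PForm α
  | imp  : PForm α → PForm α → PForm α

def PForm.Sat {α : Type} (v : α → Prop) : PForm α → Prop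
  | atom p => v p
  | fls => False
  | not φ => ¬ Sat v φ
  | and φ ψ => Sat v φ ∧ Sat v ψ
  | or φ ψ => Sat v φ ∨ Sat v ψ
  | imp φ ψ => Sat v φ → Sat v ψ

/-- Classical (propositional) global consequence. -/
def EntailsCl {α : Type} (Γ : Set (PForm α)) (φ : PForm α) : Prop :=
  ∀ v : α → Prop, (∀ ψ ∈ Γ, PForm.Sat v ψ) → PForm.Sat v φ

/-- Multimodal formulas with one box per action. -/
inductive MForm (Act α : Type) : Type
  | atom : α → MForm Act α
  | fls  : MForm Act α
  | not  : MForm Act α → MForm Act α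
  | and  : MForm Act α → MForm Act α → MForm Act α
  | or   : MForm Act α → MForm Act α → MForm Act α
  | imp  : MForm Act α → MForm Act α → MForm Act α
  | box  : Act → MForm Act α → MForm Act α

def PForm.toM {Act α : Type} : PForm α → MForm Act α
  | .atom p => .atom p
  | .fls => .fls
  | .not φ => .not φ.toM
  | .and φ ψ => .and φ.toM ψ.toM
  | .or φ ψ => .or φ.toM ψ.toM
  | .imp φ ψ => .imp φ.toM ψ.toM

/-- A Kripke model for multimodal K. -/
structure KModel (Act α : Type) where
  W : Type
  R : Act → W → W → Prop
  V : W → α → Prop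

def MForm.Sat {Act α : Type} (M : KModel Act α) : M.W → MForm Act α → Prop
  | w, atom p => M.V w p
  | _, fls => False
  | w, not φ => ¬ Sat M w φ
  | w, and φ ψ => Sat M w φ ∧ Sat M w ψ
  | w, or φ ψ => Sat M w φ ∨ Sat M w ψ
  | w, imp φ ψ => Sat M w φ → Sat M w ψ
  | w, box a φ => ∀ w', M.R a w w' → Sat M w' φ

/-- Global truth in a model. -/
def Glob {Act α : Type} (M : KModel Act α) (Φ : MForm Act α) : Prop :=
  ∀ w : M.W, MForm.Sat M w Φ

/-- Global consequence in multimodal K. -/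
def ConsK {Act α : Type} (Γ : Set (MForm Act α)) (Φ : MForm Act α) : Prop :=
  ∀ M : KModel Act α, (∀ Ψ ∈ Γ, Glob M Ψ) → Glob M Φ

/-- Literals. -/
abbrev Lit (α : Type) := α × Bool

def Lit.Sat {α : Type} (v : α → Prop) (l : Lit α) : Prop :=
  if l.2 then v l.1 else ¬ v l.1

/-- A dependence relation `⇝ ⊆ Act × Lit`. -/
abbrev Dep (Act α : Type) := Act → Lit α → Prop

/-- `⇝`-models: along `R a`, literals independent of `a` persist. -/
def IsDepModel {Act α : Type} (dep : Dep Act α) (M : KModel Act α) : Prop :=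
  ∀ (a : Act) (w w' : M.W), M.R a w w' → ∀ p : α,
    (¬ dep a (p, true) → ¬ M.V w p → ¬ M.V w' p) ∧
    (¬ dep a (p, false) → M.V w p → M.V w' p)

/-- Dependence-based global consequence. -/
def ConsDep {Act α : Type} (dep : Dep Act α) (Γ : Set (MForm Act α)) (Φ : MForm Act α) : Prop :=
  ∀ M : KModel Act α, IsDepModel dep M → (∀ Ψ ∈ Γ, Glob M Ψ) → Glob M Φ

/-- An action theory: static laws `S`, effect laws `E` (antecedent/consequent
pairs), executability laws `X` (antecedents), inexecutability laws `I`
(antecedents). -/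
structure ActionTheory (Act α : Type) where
  S : Set (PForm α)
  E : Act → Set (PForm α × PForm α)
  X : Act → Set (PForm α)
  I : Act → Set (PForm α)

/-- `⟨a⟩Φ`. -/
def MForm.diam {Act α : Type} (a : Act) (Φ : MForm Act α) : MForm Act α :=
  .not (.box a (.not Φ))

/-- Effect law `A → [a]C`. -/
def effLaw {Act α : Type} (a : Act) (e : PForm α × PForm α) : MForm Act α :=
  .imp e.1.toM (.box a e.2.toM)

/-- Executability law `A → ⟨a⟩⊤`. -/
def exeLaw {Act α : Type} (a : Act) (A : PForm α) : MForm Act α :=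
  .imp A.toM (MForm.diam a (.not .fls))

/-- Inexecutability law `A → [a]⊥`. -/
def inexLaw {Act α : Type} (a : Act) (A : PForm α) : MForm Act α :=
  .imp A.toM (.box a .fls)

variable {Act α : Type}

def staticForms (T : ActionTheory Act α) : Set (MForm Act α) := PForm.toM '' T.S
def effForms (T : ActionTheory Act α) (a : Act) : Set (MForm Act α) := effLaw a '' T.E a
def exeForms (T : ActionTheory Act α) (a : Act) : Set (MForm Act α) := exeLaw a '' T.X a
def inexForms (T : ActionTheory Act α) (a : Act) : Set (MForm Act α) := inexLaw a '' T.I a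

/-- The action theory of the single action `a`:  `S ∪ E_a ∪ X_a ∪ I_a`. -/
def formsFor (T : ActionTheory Act α) (a : Act) : Set (MForm Act α) :=
  staticForms T ∪ effForms T a ∪ exeForms T a ∪ inexForms T a

/-- The whole action theory:  `S ∪ E ∪ X ∪ I`. -/
def allForms (T : ActionTheory Act α) : Set (MForm Act α) :=
  staticForms T ∪ (⋃ a, effForms T a) ∪ (⋃ a, exeForms T a) ∪ (⋃ a, inexForms T a)

/-- Postulate PS for action `a`: no implicit static laws. -/
def PS (T : ActionTheory Act α) (dep : Dep Act α) (a : Act) : Prop :=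
  ∀ φ : PForm α, ConsDep dep (formsFor T a) φ.toM → EntailsCl T.S φ

/-- Postulate PS*: no implicit static laws for the whole theory. -/
def PSstar (T : ActionTheory Act α) (dep : Dep Act α) : Prop :=
  ∀ φ : PForm α, ConsDep dep (allForms T) φ.toM → EntailsCl T.S φ

/-- Postulate PI for action `a`: no implicit inexecutability laws. -/
def PIpost (T : ActionTheory Act α) (dep : Dep Act α) (a : Act) : Prop :=
  ∀ A : PForm α, ConsDep dep (formsFor T a) (inexLaw a A) →
    ConsK (staticForms T ∪ inexForms T a) (inexLaw a A)

/-- Postulate PI*: no implicit inexecutability laws for the whole theory. -/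
def PIstar (T : ActionTheory Act α) (dep : Dep Act α) : Prop :=
  ∀ (a : Act) (A : PForm α), ConsDep dep (allForms T) (inexLaw a A) →
    ConsK (staticForms T ∪ ⋃ a', inexForms T a') (inexLaw a A)


/-! ### Auxiliary lemmas -/

section Aux
variable {Act α : Type}

lemma sat_toM (M : KModel Act α) (w : M.W) (φ : PForm α) :
    MForm.Sat M w φ.toM ↔ PForm.Sat (M.V w) φ := by
  induction φ <;> simp [PForm.toM, MForm.Sat, PForm.Sat, *]

lemma sat_congr {u v : α → Prop} (h : ∀ p, u p ↔ v p) (φ : PForm α) :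
    PForm.Sat u φ ↔ PForm.Sat v φ := by
  induction φ <;> simp [PForm.Sat, *]

lemma sat_effLaw (M : KModel Act α) (w : M.W) (b : Act) (e : PForm α × PForm α) :
    MForm.Sat M w (effLaw b e) ↔
      (PForm.Sat (M.V w) e.1 → ∀ w', M.R b w w' → PForm.Sat (M.V w') e.2) := by
  simp [effLaw, MForm.Sat, sat_toM]

lemma sat_exeLaw (M : KModel Act α) (w : M.W) (b : Act) (B : PForm α) :
    MForm.Sat M w (exeLaw b B) ↔
      (PForm.Sat (M.V w) B → ∃ w', M.R b w w') := by
  simp only [exeLaw, MForm.diam, MForm.Sat, sat_toM]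
  constructor
  · intro h hB
    have := h hB
    by_contra hne
    push_neg at hne
    exact this fun w' hr => absurd (hne w' hr) (by simp [MForm.Sat])
  · rintro h hB hall
    obtain ⟨w', hw'⟩ := h hB
    exact hall w' hw' (by simp [MForm.Sat])

lemma sat_inexLaw (M : KModel Act α) (w : M.W) (b : Act) (B : PForm α) :
    MForm.Sat M w (inexLaw b B) ↔
      (PForm.Sat (M.V w) B → ∀ w', ¬ M.R b w w') := by
  simp [inexLaw, MForm.Sat, sat_toM]

/-! Membership lemmas -/

lemma mem_formsFor_static {T : ActionTheory Act α} {a : Act} {φ : PForm α} (h : φ ∈ T.S) :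
    φ.toM ∈ formsFor T a :=
  Or.inl (Or.inl (Or.inl ⟨φ, h, rfl⟩))

lemma mem_formsFor_eff {T : ActionTheory Act α} {a : Act} {e : PForm α × PForm α}
    (h : e ∈ T.E a) : effLaw a e ∈ formsFor T a :=
  Or.inl (Or.inl (Or.inr ⟨e, h, rfl⟩))

lemma mem_formsFor_exe {T : ActionTheory Act α} {a : Act} {B : PForm α} (h : B ∈ T.X a) :
    exeLaw a B ∈ formsFor T a :=
  Or.inl (Or.inr ⟨B, h, rfl⟩)

lemma mem_formsFor_inex {T : ActionTheory Act α} {a : Act} {B : PForm α} (h : B ∈ T.I a) :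
    inexLaw a B ∈ formsFor T a :=
  Or.inr ⟨B, h, rfl⟩

lemma mem_allForms_static {T : ActionTheory Act α} {φ : PForm α} (h : φ ∈ T.S) :
    φ.toM ∈ allForms T :=
  Or.inl (Or.inl (Or.inl ⟨φ, h, rfl⟩))

lemma mem_allForms_eff {T : ActionTheory Act α} {b : Act} {e : PForm α × PForm α}
    (h : e ∈ T.E b) : effLaw b e ∈ allForms T :=
  Or.inl (Or.inl (Or.inr (Set.mem_iUnion.mpr ⟨b, ⟨e, h, rfl⟩⟩)))

lemma mem_allForms_exe {T : ActionTheory Act α} {b : Act} {B : PForm α} (h : B ∈ T.X b) :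
    exeLaw b B ∈ allForms T :=
  Or.inl (Or.inr (Set.mem_iUnion.mpr ⟨b, ⟨B, h, rfl⟩⟩))

lemma mem_allForms_inex {T : ActionTheory Act α} {b : Act} {B : PForm α} (h : B ∈ T.I b) :
    inexLaw b B ∈ allForms T :=
  Or.inr (Set.mem_iUnion.mpr ⟨b, ⟨B, h, rfl⟩⟩)

lemma formsFor_subset_allForms (T : ActionTheory Act α) (a : Act) :
    formsFor T a ⊆ allForms T := by
  rintro Ψ (((h | ⟨e, he, rfl⟩) | ⟨B, hB, rfl⟩) | ⟨B, hB, rfl⟩)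
  · rcases h with ⟨φ, hφ, rfl⟩
    exact mem_allForms_static hφ
  · exact mem_allForms_eff he
  · exact mem_allForms_exe hB
  · exact mem_allForms_inex hB

/-! Describing a valuation by a classical formula. -/

open Classical in
noncomputable def descrList (v : α → Prop) : List α → PForm α
  | [] => PForm.not .fls
  | p :: l => PForm.and (if v p then .atom p else .not (.atom p)) (descrList v l)

lemma sat_descrList (v u : α → Prop) (l : List α) :
    PForm.Sat u (descrList v l) ↔ ∀ p ∈ l, (u p ↔ v p) := by
  induction l with
  | nil => simp [descrList, PForm.Sat]
  | cons p l ih =>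
    simp only [descrList, PForm.Sat, ih, List.mem_cons]
    by_cases h : v p
    · rw [if_pos h]
      simp only [PForm.Sat]
      constructor
      · rintro ⟨h1, h2⟩ q (rfl | hq)
        · exact ⟨fun _ => h, fun _ => h1⟩
        · exact h2 q hq
      · intro hall
        exact ⟨(hall p (Or.inl rfl)).2 h, fun q hq => hall q (Or.inr hq)⟩
    · rw [if_neg h]
      simp only [PForm.Sat]
      constructor
      · rintro ⟨h1, h2⟩ q (rfl | hq)
        · exact ⟨fun hu => absurd hu h1, fun hv => absurd hv h⟩
        · exact h2 q hq
      · intro hall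
        exact ⟨fun hu => h ((hall p (Or.inl rfl)).1 hu), fun q hq => hall q (Or.inr hq)⟩

noncomputable def descr [Fintype α] (v : α → Prop) : PForm α :=
  descrList v (Finset.univ : Finset α).toList

lemma sat_descr [Fintype α] (v u : α → Prop) :
    PForm.Sat u (descr v) ↔ ∀ p, (u p ↔ v p) := by
  rw [descr, sat_descrList]
  simp

/-- Under PS*, every valuation satisfying `S` is realized in some ⇝-model of the
whole theory. -/
lemma exists_world [Fintype α] (T : ActionTheory Act α) (dep : Dep Act α)
    (hPS : PSstar T dep) (v : α → Prop) (hv : ∀ ψ ∈ T.S, PForm.Sat v ψ) :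
    ∃ M : KModel Act α, ∃ w : M.W, IsDepModel dep M ∧
      (∀ Ψ ∈ allForms T, Glob M Ψ) ∧ (∀ p, (M.V w p ↔ v p)) := by
  by_contra hcon
  push_neg at hcon
  have hc : ConsDep dep (allForms T) (PForm.not (descr v)).toM := by
    intro M hM hG w
    have : ¬ ∀ p, (M.V w p ↔ v p) := by
      intro hall
      obtain ⟨p, hp⟩ := hcon M w hM hG
      rcases hp with ⟨h1, h2⟩ | ⟨h1, h2⟩
      · exact h2 ((hall p).mp h1)
      · exact h1 ((hall p).mpr h2)
    rw [sat_toM]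
    simpa [PForm.Sat, sat_descr] using this
  have := hPS _ hc v hv
  exact this ((sat_descr v v).mpr fun p => Iff.rfl)

/-! The combined model used in the right-to-left direction. -/

variable (M : KModel Act α) (N : M.W → KModel Act α) (d : ∀ w : M.W, (N w).W) (a : Act)

def combR (b : Act) : (M.W ⊕ Σ w : M.W, (N w).W) → (M.W ⊕ Σ w : M.W, (N w).W) → Prop
  | .inl w, .inl w' => b = a ∧ M.R a w w'
  | .inl w, .inr y => b ≠ a ∧ ∃ u, y = ⟨w, u⟩ ∧ (N w).R b (d w) u
  | .inr x, .inr y => ∃ u', y = ⟨x.1, u'⟩ ∧ (N x.1).R b x.2 u'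
  | .inr _, .inl _ => False

def combV : (M.W ⊕ Σ w : M.W, (N w).W) → α → Prop
  | .inl w => M.V w
  | .inr x => (N x.1).V x.2

def combM : KModel Act α :=
  ⟨M.W ⊕ Σ w : M.W, (N w).W, combR M N d a, combV M N⟩

end Aux

/-- under PS*, PI* holds iff PI holds for every action. -/
theorem stmt_10 [Fintype Act] [Fintype α] (T : ActionTheory Act α) (dep : Dep Act α)
    (hPS : PSstar T dep) :
    PIstar T dep ↔ ∀ a : Act, PIpost T dep a := by
  constructor
  · -- PI* implies PI for every action
    intro hPIs a A hA
    have h1 : ConsDep dep (allForms T) (inexLaw a A) := fun M hM hG =>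
      hA M hM fun Ψ hΨ => hG Ψ (formsFor_subset_allForms T a hΨ)
    have h2 := hPIs a A h1
    intro M hM w
    set M' : KModel Act α := ⟨M.W, fun b x y => b = a ∧ M.R a x y, M.V⟩ with hM'def
    have hglob : ∀ Ψ ∈ staticForms T ∪ ⋃ a', inexForms T a', Glob M' Ψ := by
      rintro Ψ (⟨φ, hφ, rfl⟩ | hΨ)
      · intro w'
        exact (sat_toM M' w' φ).mpr ((sat_toM M w' φ).mp (hM φ.toM (Or.inl ⟨φ, hφ, rfl⟩) w'))
      · rw [Set.mem_iUnion] at hΨ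
        obtain ⟨b, B, hB, rfl⟩ := hΨ
        intro w'
        rw [sat_inexLaw]
        rintro hBw w'' ⟨rfl, hr⟩
        exact (sat_inexLaw M w' b B).mp (hM _ (Or.inr ⟨B, hB, rfl⟩) w') hBw w'' hr
    have hkey := h2 M' hglob w
    rw [sat_inexLaw] at hkey ⊢
    intro hAw w' hr
    exact hkey hAw w' ⟨rfl, hr⟩
  · -- PI for every action implies PI*
    intro hPI a A hA
    have h1 : ConsDep dep (formsFor T a) (inexLaw a A) := by
      intro M hM hG w
      have hS : ∀ (w' : M.W), ∀ ψ ∈ T.S, PForm.Sat (M.V w') ψ := fun w' ψ hψ =>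
        (sat_toM M w' ψ).mp (hG ψ.toM (mem_formsFor_static hψ) w')
      have hN : ∀ w' : M.W, ∃ Nw : KModel Act α, ∃ u : Nw.W, IsDepModel dep Nw ∧
          (∀ Ψ ∈ allForms T, Glob Nw Ψ) ∧ (∀ p, (Nw.V u p ↔ M.V w' p)) :=
        fun w' => exists_world T dep hPS (M.V w') (hS w')
      choose N d hNdep hNglob hd using hN
      set M' := combM M N d a with hM'def
      have hdep : IsDepModel dep M' := by
        rintro b (w1 | x) (w2 | y) hxy p
        · obtain ⟨rfl, hr⟩ := hxy
          exact hM b w1 w2 hr p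
        · obtain ⟨hba, u, rfl, hr⟩ := hxy
          have h1 := hNdep w1 b (d w1) u hr p
          refine ⟨fun hnd hnv => h1.1 hnd fun hv => hnv ((hd w1 p).mp hv),
            fun hnd hv => h1.2 hnd ((hd w1 p).mpr hv)⟩
        · exact hxy.elim
        · obtain ⟨u', rfl, hr⟩ := hxy
          exact hNdep x.1 b x.2 u' hr p
      have hglob : ∀ Ψ ∈ allForms T, Glob M' Ψ := by
        rintro Ψ (((⟨φ, hφ, rfl⟩ | hΨ) | hΨ) | hΨ)
        · rintro (w1 | x)
          · exact (sat_toM M' (Sum.inl w1) φ).mpr (hS w1 φ hφ)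
          · exact (sat_toM M' (Sum.inr x) φ).mpr
              ((sat_toM (N x.1) x.2 φ).mp (hNglob x.1 φ.toM (mem_allForms_static hφ) x.2))
        · rw [Set.mem_iUnion] at hΨ
          obtain ⟨b, e, he, rfl⟩ := hΨ
          rintro (w1 | x)
          · refine (sat_effLaw M' (Sum.inl w1) b e).mpr ?_
            rintro hB (w2 | y) hy
            · obtain ⟨rfl, hr⟩ := hy
              exact (sat_effLaw M w1 b e).mp (hG _ (mem_formsFor_eff he) w1) hB w2 hr
            · obtain ⟨hba, u, rfl, hr⟩ := hy
              have hBd : PForm.Sat ((N w1).V (d w1)) e.1 := (sat_congr (hd w1) e.1).mpr hB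
              exact (sat_effLaw (N w1) (d w1) b e).mp
                (hNglob w1 _ (mem_allForms_eff he) (d w1)) hBd u hr
          · refine (sat_effLaw M' (Sum.inr x) b e).mpr ?_
            rintro hB (w2 | y) hy
            · exact hy.elim
            · obtain ⟨u', rfl, hr⟩ := hy
              exact (sat_effLaw (N x.1) x.2 b e).mp
                (hNglob x.1 _ (mem_allForms_eff he) x.2) hB u' hr
        · rw [Set.mem_iUnion] at hΨ
          obtain ⟨b, B, hB, rfl⟩ := hΨ
          rintro (w1 | x)
          · refine (sat_exeLaw M' (Sum.inl w1) b B).mpr ?_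
            intro hBw
            by_cases hba : b = a
            · subst hba
              obtain ⟨w2, hr⟩ :=
                (sat_exeLaw M w1 b B).mp (hG _ (mem_formsFor_exe hB) w1) hBw
              exact ⟨Sum.inl w2, ⟨rfl, hr⟩⟩
            · have hBd : PForm.Sat ((N w1).V (d w1)) B := (sat_congr (hd w1) B).mpr hBw
              obtain ⟨u, hr⟩ := (sat_exeLaw (N w1) (d w1) b B).mp
                (hNglob w1 _ (mem_allForms_exe hB) (d w1)) hBd
              exact ⟨Sum.inr ⟨w1, u⟩, hba, u, rfl, hr⟩
          · refine (sat_exeLaw M' (Sum.inr x) b B).mpr ?_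
            intro hBw
            obtain ⟨u', hr⟩ := (sat_exeLaw (N x.1) x.2 b B).mp
              (hNglob x.1 _ (mem_allForms_exe hB) x.2) hBw
            exact ⟨Sum.inr ⟨x.1, u'⟩, u', rfl, hr⟩
        · rw [Set.mem_iUnion] at hΨ
          obtain ⟨b, B, hB, rfl⟩ := hΨ
          rintro (w1 | x)
          · refine (sat_inexLaw M' (Sum.inl w1) b B).mpr ?_
            rintro hBw (w2 | y) hy
            · obtain ⟨rfl, hr⟩ := hy
              exact (sat_inexLaw M w1 b B).mp (hG _ (mem_formsFor_inex hB) w1) hBw w2 hr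
            · obtain ⟨hba, u, rfl, hr⟩ := hy
              exact (sat_inexLaw (N w1) (d w1) b B).mp
                (hNglob w1 _ (mem_allForms_inex hB) (d w1))
                ((sat_congr (hd w1) B).mpr hBw) u hr
          · refine (sat_inexLaw M' (Sum.inr x) b B).mpr ?_
            rintro hBw (w2 | y) hy
            · exact hy
            · obtain ⟨u', rfl, hr⟩ := hy
              exact (sat_inexLaw (N x.1) x.2 b B).mp
                (hNglob x.1 _ (mem_allForms_inex hB) x.2) hBw u' hr
      have hkey := hA M' hdep hglob (Sum.inl w)
      replace hkey := (sat_inexLaw M' (Sum.inl w) a A).mp hkey; rw [sat_inexLaw]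
      intro hAw w' hr
      exact hkey hAw (Sum.inl w') ⟨rfl, hr⟩
    have h2 := hPI a A h1
    intro M hM
    refine h2 M fun Ψ hΨ => hM Ψ ?_
    rcases hΨ with h | h
    · exact Or.inl h
    · exact Or.inr (Set.mem_iUnion.mpr ⟨a, h⟩)
end

section
/- Modularity for executabilities: if an action theory ⟨S, E, X, I⟩ satisfies Postulate PS*, then for any classical formula A and action a, S, E, X, I ⊨_⇝ A → ⟨a⟩⊤ if and only if S, X_a ⊨_⇝ A → ⟨a⟩⊤. -/
variable {Act α : Type}

section Aux
open Classical

lemma satM_toM {Act α : Type} (M : KModel Act α) (w : M.W) (φ : PForm α) :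
    MForm.Sat M w (φ.toM : MForm Act α) ↔ PForm.Sat (M.V w) φ := by
  induction φ <;> simp [PForm.toM, MForm.Sat, PForm.Sat, *]

lemma psat_ext {α : Type} {v v' : α → Prop} (h : ∀ p, v p ↔ v' p) (φ : PForm α) :
    PForm.Sat v φ ↔ PForm.Sat v' φ := by
  induction φ <;> simp [PForm.Sat, h, *]

noncomputable def litOf {α : Type} (v : α → Prop) (p : α) : PForm α :=
  if v p then .atom p else .not (.atom p)

lemma sat_litOf {α : Type} (v v' : α → Prop) (p : α) :
    PForm.Sat v' (litOf v p) ↔ (v' p ↔ v p) := by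
  unfold litOf; split <;> simp [PForm.Sat] <;> tauto

noncomputable def charForm {α : Type} [Fintype α] (v : α → Prop) : PForm α :=
  (Finset.univ : Finset α).toList.foldr (fun p φ => .and (litOf v p) φ) (.not .fls)

lemma sat_charForm {α : Type} [Fintype α] (v v' : α → Prop) :
    PForm.Sat v' (charForm v) ↔ ∀ p, (v' p ↔ v p) := by
  unfold charForm
  have H : ∀ l : List α,
      PForm.Sat v' (l.foldr (fun p φ => .and (litOf v p) φ) (.not .fls)) ↔
        ∀ p ∈ l, (v' p ↔ v p) := by
    intro l; induction l with
    | nil => simp [PForm.Sat]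
    | cons p l ih => simp [PForm.Sat, sat_litOf, ih]
  rw [H]; simp

end Aux

/-- modularity for executabilities: under PS*, deducing an
executability law for `a` only needs `S` and `X_a`. -/
theorem stmt_12 [Fintype Act] [Fintype α] (T : ActionTheory Act α) (dep : Dep Act α)
    (hPS : PSstar T dep) (a : Act) (A : PForm α) :
    ConsDep dep (allForms T) (exeLaw a A) ↔
    ConsDep dep (staticForms T ∪ exeForms T a) (exeLaw a A) := by
  constructor
  · -- hard direction
    intro h M hM hΓ w
    by_contra hne
    -- extract: w satisfies A, and w has no a-successor
    have hA : PForm.Sat (M.V w) A := by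
      by_contra hA
      apply hne
      intro hA'
      exact absurd ((satM_toM M w A).1 hA') hA
    have hnosucc : ∀ w', ¬ M.R a w w' := by
      intro w' hr
      apply hne
      intro _
      simp only [MForm.diam, MForm.Sat]
      intro hall
      exact hall w' hr (by simp [MForm.Sat])
    set v := M.V w with hv
    -- every executability antecedent for a is false at v
    have hXa : ∀ B ∈ T.X a, ¬ PForm.Sat v B := by
      intro B hB hsatB
      have hglob := hΓ (exeLaw a B) (Or.inr ⟨B, hB, rfl⟩) w
      simp only [exeLaw, MForm.diam, MForm.Sat] at hglob
      exact hglob ((satM_toM M w B).2 hsatB) (fun w' hr _ => hnosucc w' hr)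
    have hS : ∀ ψ ∈ T.S, PForm.Sat v ψ := by
      intro ψ hψ
      exact (satM_toM M w ψ).1 (hΓ (PForm.toM ψ) (Or.inl ⟨ψ, hψ, rfl⟩) w)
    -- key claim: allForms refutes the characteristic formula of v
    have key : ConsDep dep (allForms T) ((PForm.not (charForm v)).toM : MForm Act α) := by
      intro N hN hNΓ u
      rw [satM_toM, show PForm.Sat (N.V u) (PForm.not (charForm v)) ↔
        ¬ PForm.Sat (N.V u) (charForm v) from Iff.rfl, sat_charForm]
      intro hveq
      -- modified model: remove a-arrows from worlds with valuation v
      set P : N.W → Prop := fun x => ∀ p, N.V x p ↔ v p with hP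
      set N' : KModel Act α := ⟨N.W, fun b x y => N.R b x y ∧ ¬ (b = a ∧ P x), N.V⟩
        with hN'
      have hdep' : IsDepModel dep N' := fun b x y hr p => hN b x y hr.1 p
      have hΓ' : ∀ Ψ ∈ allForms T, Glob N' Ψ := by
        rintro Ψ (((⟨ψ, hψ, rfl⟩ | hΨ) | hΨ) | hΨ)
        · -- static
          intro x
          rw [satM_toM]
          exact (satM_toM N x ψ).1
            (hNΓ (PForm.toM ψ) (Or.inl (Or.inl (Or.inl ⟨ψ, hψ, rfl⟩))) x)
        · -- effect laws
          obtain ⟨b, hb⟩ := Set.mem_iUnion.1 hΨ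
          obtain ⟨e, he, rfl⟩ := hb
          intro x
          simp only [effLaw, MForm.Sat]
          intro hant y hry
          have hglob := hNΓ (effLaw b e) (Or.inl (Or.inl (Or.inr
            (Set.mem_iUnion.2 ⟨b, ⟨e, he, rfl⟩⟩)))) x
          simp only [effLaw, MForm.Sat] at hglob
          have : MForm.Sat N x (PForm.toM e.1) := by
            rw [satM_toM]; exact (satM_toM N' x e.1).1 hant
          have := hglob this y hry.1
          rw [satM_toM] at this ⊢
          exact this
        · -- executability laws
          obtain ⟨b, hb⟩ := Set.mem_iUnion.1 hΨ
          obtain ⟨B, hB, rfl⟩ := hb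
          intro x
          simp only [exeLaw, MForm.diam, MForm.Sat]
          intro hant hall
          have hBx : PForm.Sat (N.V x) B := (satM_toM N' x B).1 hant
          by_cases hcase : b = a ∧ P x
          · obtain ⟨rfl, hPx⟩ := hcase
            exact hXa B hB ((psat_ext hPx B).1 hBx)
          · have hglob := hNΓ (exeLaw b B) (Or.inl (Or.inr
              (Set.mem_iUnion.2 ⟨b, ⟨B, hB, rfl⟩⟩))) x
            simp only [exeLaw, MForm.diam, MForm.Sat] at hglob
            apply hglob ((satM_toM N x B).2 hBx)
            intro y hry hy
            exact hall y ⟨hry, hcase⟩ (by simp [MForm.Sat])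
        · -- inexecutability laws
          obtain ⟨b, hb⟩ := Set.mem_iUnion.1 hΨ
          obtain ⟨B, hB, rfl⟩ := hb
          intro x
          simp only [inexLaw, MForm.Sat]
          intro hant y hry
          have hglob := hNΓ (inexLaw b B) (Or.inr
            (Set.mem_iUnion.2 ⟨b, ⟨B, hB, rfl⟩⟩)) x
          simp only [inexLaw, MForm.Sat] at hglob
          exact hglob ((satM_toM N x B).2 ((satM_toM N' x B).1 hant)) y hry.1
      have hexe := h N' hdep' hΓ' u
      simp only [exeLaw, MForm.diam, MForm.Sat] at hexe
      apply hexe ((satM_toM N' u A).2 ((psat_ext (fun p => (hveq p).symm) A).1 hA))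
      intro y hry _
      exact absurd (⟨rfl, hveq⟩ : a = a ∧ P u) hry.2
    have hcl := hPS _ key v hS
    exact hcl ((sat_charForm v v).2 fun p => Iff.rfl)
  · -- easy direction: monotonicity
    intro h M hM hΓ
    apply h M hM
    rintro Ψ (hΨ | hΨ)
    · exact hΓ Ψ (Or.inl (Or.inl (Or.inl hΨ)))
    · exact hΓ Ψ (Or.inl (Or.inr (Set.mem_iUnion.2 ⟨a, hΨ⟩)))
end

section
/- Modularity for inexecutabilities: if an action theory ⟨S, E, X, I⟩ satisfies both Postulate PS* and Postulate PI*, then for any classical formula A and action a, S, E, X, I ⊨_⇝ A → [a]⊥ if and only if S, I_a ⊨_⇝ A → [a]⊥. -/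
variable {Act α : Type}

lemma satP_iff (M : KModel Act α) (w : M.W) (φ : PForm α) :
    MForm.Sat M w (φ.toM : MForm Act α) ↔ PForm.Sat (M.V w) φ := by
  induction φ <;> simp [PForm.toM, MForm.Sat, PForm.Sat, *]

/-- modularity for inexecutabilities: under PS* and PI*,
deducing an inexecutability law for `a` only needs `S` and `I_a`. -/
theorem stmt_13 [Fintype Act] [Fintype α] (T : ActionTheory Act α) (dep : Dep Act α)
    (hPS : PSstar T dep) (hPI : PIstar T dep) (a : Act) (A : PForm α) :
    ConsDep dep (allForms T) (inexLaw a A) ↔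
    ConsDep dep (staticForms T ∪ inexForms T a) (inexLaw a A) := by
  constructor
  · intro h M hDM hM
    have hK := hPI a A h
    let M' : KModel Act α := ⟨M.W, fun a' w w' => a' = a ∧ M.R a w w', M.V⟩
    have hS : ∀ φ ∈ T.S, Glob M (PForm.toM φ) := by
      intro φ hφ
      exact hM _ (Or.inl ⟨φ, hφ, rfl⟩)
    have hI : ∀ B ∈ T.I a, Glob M (inexLaw a B) := by
      intro B hB
      exact hM _ (Or.inr ⟨B, hB, rfl⟩)
    have hK' : Glob M' (inexLaw a A) := by
      apply hK
      rintro Ψ (⟨φ, hφ, rfl⟩ | hΨ)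
      · intro w
        have := hS φ hφ w
        rw [satP_iff] at this
        exact (satP_iff M' w φ).2 this
      · simp only [Set.mem_iUnion] at hΨ
        obtain ⟨a', B, hB, rfl⟩ := hΨ
        intro w hw w' hr
        obtain ⟨rfl, hr⟩ := hr
        have hw2 : MForm.Sat M w (PForm.toM B) := (satP_iff M w B).2 ((satP_iff M' w B).1 hw)
        exact hI B hB w hw2 w' hr
    intro w hw
    have hw' : MForm.Sat M' w (PForm.toM A) := (satP_iff M' w A).2 ((satP_iff M w A).1 hw)
    intro w' hr
    exact hK' w hw' w' ⟨rfl, hr⟩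
  · intro h M hDM hM
    apply h M hDM
    rintro Ψ (hΨ | hΨ)
    · exact hM _ (Or.inl (Or.inl (Or.inl hΨ)))
    · exact hM _ (Or.inr (Set.mem_iUnion.2 ⟨a, hΨ⟩))
end
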